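/- An integral domain R is a Dedekind domain if and only if R is a Noetherian cancellation domain, i.e., R is Noetherian and for all nonzero ideals I₁, I₂, J of R, the equality I₁ · J = I₂ · J implies I₁ = I₂. -/

import Mathlib

open Ideal FractionalIdeal nonZeroDivisors

section Aux

variable {R : Type*} [CommRing R] [IsDomain R]

private theorem aux_unit_singleton {b : R} (hb : b ≠ 0) :
    IsUnit ((span {b} : Ideal R) : FractionalIdeal R⁰ (FractionRing R)) := by
  rw [coeIdeal_span_singleton]
  have hb' : algebraMap R (FractionRing R) b ≠ 0 := by
    exact fun h => hb ((IsFractionRing.to_map_eq_zero_iff (K := FractionRing R)).mp h)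
  exact IsUnit.of_mul_eq_one (spanSingleton R⁰ (algebraMap R (FractionRing R) b)⁻¹)
    (by rw [spanSingleton_mul_spanSingleton, mul_inv_cancel₀ hb', spanSingleton_one])

private theorem aux_identity (X Y Z : Ideal R) :
    (X ⊔ Y) * (Y ⊔ Z) * (Z ⊔ X) = (X ⊔ Y ⊔ Z) * (X * Y ⊔ Y * Z ⊔ Z * X) := by
  have hle : X * Y * Z ≤ (X ⊔ Y) * (Y ⊔ Z) * (Z ⊔ X) :=
    mul_le_mul' (mul_le_mul' le_sup_left le_sup_left) le_sup_left
  have key : (X ⊔ Y) * (Y ⊔ Z) * (Z ⊔ X) + X * Y * Z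
      = (X ⊔ Y ⊔ Z) * (X * Y ⊔ Y * Z ⊔ Z * X) := by
    simp only [← Ideal.add_eq_sup]; ring
  rw [← key, Ideal.add_eq_sup, sup_eq_left.mpr hle]

variable (hc : ∀ I₁ I₂ J : Ideal R, I₁ ≠ ⊥ → I₂ ≠ ⊥ → J ≠ ⊥ → I₁ * J = I₂ * J → I₁ = I₂)

include hc in
private theorem aux_dvd {p q c d : R} (hq : q ≠ 0) (h : p * p = c * (q * q) + d * (p * q)) :
    q ∣ p := by
  have hne : (span {p, q} : Ideal R) ≠ ⊥ :=
    Submodule.ne_bot_iff _ |>.mpr ⟨q, subset_span (by simp), hq⟩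
  have hqne : (span {q} : Ideal R) ≠ ⊥ :=
    Submodule.ne_bot_iff _ |>.mpr ⟨q, subset_span (by simp), hq⟩
  have hqq : q * q ∈ (span {q} : Ideal R) * span {p, q} :=
    mul_mem_mul (subset_span (by simp)) (subset_span (by simp))
  have hqp : p * q ∈ (span {q} : Ideal R) * span {p, q} := by
    rw [mul_comm]
    exact mul_mem_mul (subset_span (by simp)) (subset_span (by simp))
  have hmul : (span {p, q} : Ideal R) * span {p, q} = span {q} * span {p, q} := by
    apply le_antisymm
    · rw [span_pair_mul_span_pair, span_le]
      intro x hx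
      simp only [Set.mem_insert_iff, Set.mem_singleton_iff] at hx
      rcases hx with rfl | rfl | rfl | rfl
      · rw [h]; exact add_mem (Ideal.mul_mem_left _ c hqq) (Ideal.mul_mem_left _ d hqp)
      · exact hqp
      · rw [show q * p = p * q from mul_comm q p]; exact hqp
      · exact hqq
    · exact mul_le_mul' (span_mono (by simp)) le_rfl
  have heq := hc _ _ _ hne hqne hne hmul
  have hp : p ∈ (span {q} : Ideal R) := heq ▸ subset_span (by simp)
  exact mem_span_singleton.mp hp

set_option maxHeartbeats 1000000 in
include hc in
private theorem aux_mem {a b : R} (ha : a ≠ 0) (hb : b ≠ 0) :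
    ∃ r s : R, a * b = r * (a * a) + s * (b * b) := by
  have hJ : (span {a, b} : Ideal R) ≠ ⊥ :=
    Submodule.ne_bot_iff _ |>.mpr ⟨a, subset_span (by simp), ha⟩
  have hT : (span {a * a, b * b, a * b} : Ideal R) ≠ ⊥ :=
    Submodule.ne_bot_iff _ |>.mpr ⟨a * a, subset_span (by simp), mul_ne_zero ha ha⟩
  have hS : (span {a * a, b * b} : Ideal R) ≠ ⊥ :=
    Submodule.ne_bot_iff _ |>.mpr ⟨a * a, subset_span (by simp), mul_ne_zero ha ha⟩
  have haaa : a * a * a ∈ (span {a * a, b * b} : Ideal R) * span {a, b} :=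
    mul_mem_mul (subset_span (by simp)) (subset_span (by simp))
  have haab : a * a * b ∈ (span {a * a, b * b} : Ideal R) * span {a, b} :=
    mul_mem_mul (subset_span (by simp)) (subset_span (by simp))
  have hbba : b * b * a ∈ (span {a * a, b * b} : Ideal R) * span {a, b} :=
    mul_mem_mul (subset_span (by simp)) (subset_span (by simp))
  have hbbb : b * b * b ∈ (span {a * a, b * b} : Ideal R) * span {a, b} :=
    mul_mem_mul (subset_span (by simp)) (subset_span (by simp))
  have hmul : (span {a * a, b * b, a * b} : Ideal R) * span {a, b}
      = span {a * a, b * b} * span {a, b} := by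
    apply le_antisymm
    · rw [span_mul_span', span_le]
      intro x hx
      rw [Set.mem_mul] at hx
      obtain ⟨u, hu, v, hv, rfl⟩ := hx
      simp only [Set.mem_insert_iff, Set.mem_singleton_iff] at hu hv
      rcases hu with rfl | rfl | rfl <;> rcases hv with h | h <;> rw [h] <;>
        first
          | exact haaa
          | exact haab
          | exact hbba
          | exact hbbb
          | (rw [show a * b * a = a * a * b by ring]; exact haab)
          | (rw [show a * b * b = b * b * a by ring]; exact hbba)
    · exact mul_le_mul' (span_mono (Set.insert_subset_insert
        (Set.singleton_subset_iff.mpr (Set.mem_insert _ _)))) le_rfl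
  have heq := hc _ _ _ hT hS hJ hmul
  have hab : a * b ∈ (span {a * a, b * b} : Ideal R) := heq ▸ subset_span (by simp)
  obtain ⟨r, s, hrs⟩ := mem_span_pair.mp hab
  exact ⟨r, s, hrs.symm⟩

include hc in
private theorem aux_unit_pair {a b : R} (ha : a ≠ 0) (hb : b ≠ 0) :
    IsUnit ((span {a, b} : Ideal R) : FractionalIdeal R⁰ (FractionRing R)) := by
  obtain ⟨r, s, hrs⟩ := aux_mem hc ha hb
  have hdvd : b ∣ r * a := by
    apply aux_dvd hc hb (c := -(r * s)) (d := 1)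
    linear_combination -r * hrs
  obtain ⟨t, ht⟩ := hdvd
  have hA : a = t * a + s * b := by
    apply mul_left_cancel₀ hb
    linear_combination hrs + a * ht
  have key : (span {a, b} : Ideal R) * span {r, 1 - t} = span {b} := by
    apply le_antisymm
    · rw [span_pair_mul_span_pair, span_le]
      intro x hx
      simp only [Set.mem_insert_iff, Set.mem_singleton_iff] at hx
      rcases hx with rfl | rfl | rfl | rfl
      · exact mem_span_singleton.mpr ⟨t, by linear_combination ht⟩
      · exact mem_span_singleton.mpr ⟨s, by linear_combination hA⟩
      · exact mem_span_singleton.mpr ⟨r, by ring⟩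
      · exact mem_span_singleton.mpr ⟨1 - t, rfl⟩
    · rw [span_le, Set.singleton_subset_iff]
      have h1 : a * r ∈ (span {a, b} : Ideal R) * span {r, 1 - t} :=
        mul_mem_mul (subset_span (by simp)) (subset_span (by simp))
      have h2 : b * (1 - t) ∈ (span {a, b} : Ideal R) * span {r, 1 - t} :=
        mul_mem_mul (subset_span (by simp)) (subset_span (by simp))
      have hb' : b = a * r + b * (1 - t) := by linear_combination -ht
      have hmem := add_mem h1 h2
      rwa [← hb'] at hmem
  have hcoe : ((span {a, b} : Ideal R) : FractionalIdeal R⁰ (FractionRing R)) *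
      ((span {r, 1 - t} : Ideal R) : FractionalIdeal R⁰ (FractionRing R)) =
      ((span {b} : Ideal R) : FractionalIdeal R⁰ (FractionRing R)) := by
    rw [← coeIdeal_mul, key]
  exact isUnit_of_mul_isUnit_left (hcoe ▸ aux_unit_singleton hb)

include hc in
private theorem aux_unit_span (n : ℕ) (s : Finset R) (hcard : s.card ≤ n)
    (hns : span (s : Set R) ≠ ⊥) :
    IsUnit ((span (s : Set R) : Ideal R) : FractionalIdeal R⁰ (FractionRing R)) := by
  classical
  induction n generalizing s with
  | zero =>
    rw [Nat.le_zero, Finset.card_eq_zero] at hcard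
    subst hcard
    simp only [Finset.coe_empty, span_empty] at hns
    exact absurd rfl hns
  | succ n ih =>
    by_cases hle : s.card ≤ n
    · exact ih s hle hns
    have hcard' : s.card = n + 1 := le_antisymm hcard (not_le.mp hle)
    match n, ih with
    | 0, _ =>
      obtain ⟨a, rfl⟩ := Finset.card_eq_one.mp hcard'
      simp only [Finset.coe_singleton] at hns ⊢
      exact aux_unit_singleton (fun h => hns (by rw [h]; exact span_singleton_eq_bot.mpr rfl))
    | 1, _ =>
      obtain ⟨a, b, hab, rfl⟩ := Finset.card_eq_two.mp hcard'
      simp only [Finset.coe_insert, Finset.coe_singleton] at hns ⊢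
      by_cases ha : a = 0
      · subst ha
        have he : (span ({0, b} : Set R) : Ideal R) = span {b} := by
          rw [span_insert, span_singleton_eq_bot.mpr rfl, bot_sup_eq]
        rw [he] at hns ⊢
        exact aux_unit_singleton (fun h => hns (by rw [h]; exact span_singleton_eq_bot.mpr rfl))
      by_cases hb : b = 0
      · subst hb
        have he : (span ({a, 0} : Set R) : Ideal R) = span {a} := by
          rw [Set.pair_comm, span_insert, span_singleton_eq_bot.mpr rfl, bot_sup_eq]
        rw [he] at hns ⊢
        exact aux_unit_singleton ha
      exact aux_unit_pair hc ha hb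
    | (k + 2), ih =>
      obtain ⟨y, t, hyt, rfl, htcard⟩ := Finset.card_eq_succ.mp hcard'
      obtain ⟨z, u, hzu, rfl, hucard⟩ := Finset.card_eq_succ.mp htcard
      set X : Ideal R := span (u : Set R) with hX
      set Y : Ideal R := span {y} with hY
      set Z : Ideal R := span {z} with hZ
      have hspan : span ((insert y (insert z u) : Finset R) : Set R) = Y ⊔ (Z ⊔ X) := by
        rw [Finset.coe_insert, Finset.coe_insert, span_insert, span_insert]
      rw [hspan] at hns ⊢
      have hA : span ((insert y u : Finset R) : Set R) = X ⊔ Y := by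
        rw [Finset.coe_insert, span_insert, sup_comm]
      have hB : span (({y, z} : Finset R) : Set R) = Y ⊔ Z := by
        rw [Finset.coe_insert, Finset.coe_singleton, span_insert]
      have hC : span ((insert z u : Finset R) : Set R) = Z ⊔ X := by
        rw [Finset.coe_insert, span_insert]
      have hAcard : (insert y u : Finset R).card ≤ k + 2 := by
        have := Finset.card_insert_le y u; omega
      have hBcard : ({y, z} : Finset R).card ≤ k + 2 := by
        have := Finset.card_insert_le y ({z} : Finset R); simp at this ⊢; omega
      have hCcard : (insert z u : Finset R).card ≤ k + 2 := by
        have := Finset.card_insert_le z u; omega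
      by_cases hBne : Y ⊔ Z = ⊥
      · obtain ⟨hY0, hZ0⟩ := sup_eq_bot_iff.mp hBne
        rw [hY0, hZ0, bot_sup_eq, bot_sup_eq] at hns ⊢
        exact ih u (by omega) hns
      by_cases hAne : X ⊔ Y = ⊥
      · obtain ⟨hX0, hY0⟩ := sup_eq_bot_iff.mp hAne
        rw [hY0, hX0, bot_sup_eq, sup_bot_eq] at hns ⊢
        exact aux_unit_singleton
          (fun h => hns (by rw [hZ, h]; exact span_singleton_eq_bot.mpr rfl))
      by_cases hCne : Z ⊔ X = ⊥
      · obtain ⟨hZ0, hX0⟩ := sup_eq_bot_iff.mp hCne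
        rw [hZ0, hX0, bot_sup_eq, sup_bot_eq] at hns ⊢
        exact aux_unit_singleton
          (fun h => hns (by rw [hY, h]; exact span_singleton_eq_bot.mpr rfl))
      have hu1 : IsUnit ((X ⊔ Y : Ideal R) : FractionalIdeal R⁰ (FractionRing R)) := by
        rw [← hA]; exact ih _ hAcard (hA ▸ hAne)
      have hu2 : IsUnit ((Y ⊔ Z : Ideal R) : FractionalIdeal R⁰ (FractionRing R)) := by
        rw [← hB]; exact ih _ hBcard (hB ▸ hBne)
      have hu3 : IsUnit ((Z ⊔ X : Ideal R) : FractionalIdeal R⁰ (FractionRing R)) := by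
        rw [← hC]; exact ih _ hCcard (hC ▸ hCne)
      have hprod : IsUnit (((X ⊔ Y) * (Y ⊔ Z) * (Z ⊔ X) : Ideal R) :
          FractionalIdeal R⁰ (FractionRing R)) := by
        rw [coeIdeal_mul, coeIdeal_mul]
        exact (hu1.mul hu2).mul hu3
      rw [aux_identity, coeIdeal_mul] at hprod
      have hfin := isUnit_of_mul_isUnit_left hprod
      have hXYZ : (X ⊔ Y ⊔ Z : Ideal R) = Y ⊔ (Z ⊔ X) := by
        rw [sup_comm X Y, sup_assoc]; rw [sup_comm X Z]
      rwa [hXYZ] at hfin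

end Aux

/-- An integral domain R is a Dedekind domain iff R is a Noetherian cancellation domain:
R is Noetherian and I₁ * J = I₂ * J implies I₁ = I₂ for all nonzero ideals I₁, I₂, J. -/
theorem stmt17 (R : Type*) [CommRing R] [IsDomain R] :
    IsDedekindDomain R ↔
      IsNoetherianRing R ∧
        ∀ I₁ I₂ J : Ideal R, I₁ ≠ ⊥ → I₂ ≠ ⊥ → J ≠ ⊥ → I₁ * J = I₂ * J → I₁ = I₂ := by
  constructor
  · intro h
    refine ⟨inferInstance, fun I₁ I₂ J h1 h2 hJ heq => ?_⟩
    have hJ' : J ≠ 0 := by rwa [Submodule.zero_eq_bot]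
    exact mul_right_cancel₀ hJ' heq
  · rintro ⟨hN, hc⟩
    have hInv : ∀ I ≠ (⊥ : FractionalIdeal R⁰ (FractionRing R)), I * I⁻¹ = 1 := by
      intro I hI
      apply (FractionalIdeal.mul_inv_cancel_iff_isUnit (FractionRing R)).mpr
      obtain ⟨a, aI, ha, haI⟩ := FractionalIdeal.exists_eq_spanSingleton_mul I
      have haI' : aI ≠ ⊥ := by
        rintro rfl
        apply hI
        rw [haI, coeIdeal_bot, mul_zero]
        rfl
      have ha' : (algebraMap R (FractionRing R) a)⁻¹ ≠ 0 := by
        apply inv_ne_zero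
        exact fun h => ha ((IsFractionRing.to_map_eq_zero_iff (K := FractionRing R)).mp h)
      have hu1 : IsUnit (spanSingleton R⁰ (algebraMap R (FractionRing R) a)⁻¹) :=
        IsUnit.of_mul_eq_one (spanSingleton R⁰ ((algebraMap R (FractionRing R) a)⁻¹)⁻¹)
          (by rw [spanSingleton_mul_spanSingleton, mul_inv_cancel₀ ha', spanSingleton_one])
      have hu2 : IsUnit ((aI : Ideal R) : FractionalIdeal R⁰ (FractionRing R)) := by
        obtain ⟨s, hs⟩ := (isNoetherianRing_iff.mp hN).noetherian aI
        rw [Ideal.submodule_span_eq] at hs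
        rw [← hs]
        exact aux_unit_span hc s.card s le_rfl (by rw [hs]; exact haI')
      rw [haI]
      exact hu1.mul hu2
    exact (isDedekindDomain_iff_mul_inv_cancel (K := FractionRing R)).mpr hInv
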